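/- Let p > 1 be a real number and let n be a positive integer. Then the sum of P^Sym_n(λ) over all partitions λ with at most n parts equals 1; that is, P^Sym_n is a probability distribution on partitions. -/

import Mathlib

open Finset

noncomputable section

/-- A partition: a multiset of positive natural numbers. -/
def Ptn : Type := {s : Multiset ℕ // ∀ x ∈ s, 0 < x}

namespace Ptn

/-- `|λ|`, the size of the partition. -/
def size (l : Ptn) : ℕ := l.1.sum
/-- `r(λ)`, the number of parts. -/
def numParts (l : Ptn) : ℕ := l.1.card
/-- `m_i(λ)`, the number of parts of size `i`. -/
def mult (l : Ptn) (i : ℕ) : ℕ := l.1.count i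
/-- `λ'_i`, the number of parts of size at least `i` (the `i`-th column length). -/
def col (l : Ptn) (i : ℕ) : ℕ := (l.1.filter (fun x => i ≤ x)).card
/-- `λ_1`, the largest part. -/
def maxPart (l : Ptn) : ℕ := l.1.sup
/-- `∑_i (λ'_i)^2` (over `i ≥ 1`; the terms vanish for `i > |λ|`). -/
def sumColSq (l : Ptn) : ℕ := ∑ i ∈ Finset.Icc 1 l.size, (l.col i) ^ 2
/-- `n(λ) = ∑_i C(λ'_i, 2)` (over `i ≥ 1`; the terms vanish for `i > |λ|`). -/
def nStat (l : Ptn) : ℕ := ∑ i ∈ Finset.Icc 1 l.size, Nat.choose (l.col i) 2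

end Ptn

/-- `(x)_i = (1-x)(1-x/p)⋯(1-x/p^{i-1})`. -/
def poch (p x : ℝ) (i : ℕ) : ℝ := ∏ k ∈ Finset.range i, (1 - x / p ^ k)

/-- `|Aut(λ)| = p^{∑ (λ'_i)^2} ∏_i (1/p)_{m_i(λ)}`. -/
def autCard (p : ℝ) (l : Ptn) : ℝ :=
  p ^ l.sumColSq * ∏ i ∈ Finset.Icc 1 l.size, poch p (1 / p) (l.mult i)

/-- The measure `P_{d,u}` on partitions. -/
def Pdu (p u : ℝ) (d : ℕ) (l : Ptn) : ℝ :=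
  if l.numParts ≤ d then
    u ^ l.size / autCard p l
      * ∏ i ∈ Finset.Icc 1 d, (1 - u / p ^ i)
      * ∏ i ∈ Finset.Icc (d - l.numParts + 1) d, (1 - 1 / p ^ i)
  else 0

/-- The measure `P^{Sym}_n` on partitions (here `⌈(n-r)/2⌉` is `(n-r+1)/2` in
natural division). -/
def PSym (p : ℝ) (n : ℕ) (l : Ptn) : ℝ :=
  if l.numParts ≤ n then
    (∏ j ∈ Finset.Icc (n - l.numParts + 1) n, (1 - 1 / p ^ j)) *
      (∏ i ∈ Finset.Icc 1 ((n - l.numParts + 1) / 2), (1 - 1 / p ^ (2 * i - 1))) /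
      (p ^ (l.nStat + l.size) *
        ∏ i ∈ Finset.Icc 1 l.size,
          ∏ j ∈ Finset.Icc 1 (l.mult i / 2), (1 - 1 / p ^ (2 * j)))
  else 0


def pq (q : ℝ) (k : ℕ) : ℝ := ∏ j ∈ Finset.Icc 1 k, (1 - q^j)
def Oq (q : ℝ) (m : ℕ) : ℝ := ∏ i ∈ Finset.Icc 1 m, (1 - q^(2*i-1))
def evq (q : ℝ) (m : ℕ) : ℝ := ∏ j ∈ Finset.Icc 1 (m/2), (1 - q^(2*j))
def Tq (q : ℝ) (n r : ℕ) : ℝ :=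
  pq q n * q^(r*(r+1)/2) * Oq q ((n - r + 1)/2) / (pq q r * pq q (n - r))

variable {q : ℝ}

lemma pq_zero : pq q 0 = 1 := by simp [pq]

lemma pq_succ (k : ℕ) : pq q (k+1) = pq q k * (1 - q^(k+1)) := by
  rw [pq, Finset.prod_Icc_succ_top (by omega : 1 ≤ k + 1), pq]

lemma Oq_zero : Oq q 0 = 1 := by simp [Oq]

lemma Oq_succ (m : ℕ) : Oq q (m+1) = Oq q m * (1 - q^(2*m+1)) := by
  rw [Oq, Finset.prod_Icc_succ_top (by omega : 1 ≤ m + 1), Oq]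
  have : 2*(m+1)-1 = 2*m+1 := by omega
  rw [this]

lemma one_sub_pow_pos (hq0 : 0 ≤ q) (hq1 : q < 1) {j : ℕ} (hj : 1 ≤ j) :
    0 < 1 - q ^ j := by
  have := pow_lt_one₀ hq0 hq1 (by omega : j ≠ 0)
  linarith

lemma pq_pos (hq0 : 0 ≤ q) (hq1 : q < 1) (k : ℕ) : 0 < pq q k := by
  refine Finset.prod_pos fun j hj => one_sub_pow_pos hq0 hq1 ?_
  exact (Finset.mem_Icc.1 hj).1

lemma Oq_pos (hq0 : 0 ≤ q) (hq1 : q < 1) (m : ℕ) : 0 < Oq q m := by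
  refine Finset.prod_pos fun i hi => one_sub_pow_pos hq0 hq1 ?_
  have := (Finset.mem_Icc.1 hi).1; omega

lemma evq_pos (hq0 : 0 ≤ q) (hq1 : q < 1) (m : ℕ) : 0 < evq q m := by
  refine Finset.prod_pos fun i hi => one_sub_pow_pos hq0 hq1 ?_
  have := (Finset.mem_Icc.1 hi).1; omega

/-- interleaving: `O(⌈m/2⌉) * ev(m) = (q;q)_m`. -/
lemma Oq_mul_evq (m : ℕ) : Oq q ((m+1)/2) * evq q m = pq q m := by
  induction m with
  | zero => simp [Oq_zero, evq, pq]
  | succ m ih =>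
    rcases Nat.even_or_odd m with he | ho
    · obtain ⟨t, rfl⟩ := he
      have hev : evq q (t + t + 1) = evq q (t + t) := by
        have e : (t+t+1)/2 = (t+t)/2 := by omega
        unfold evq; rw [e]
      have e1 : (t+t+1+1)/2 = t+1 := by omega
      have e2 : (t+t+1)/2 = t := by omega
      rw [e1, Oq_succ, hev, pq_succ]
      rw [e2] at ih
      have e3 : 2*t+1 = t+t+1 := by omega
      rw [e3]
      linear_combination (1 - q^(t+t+1)) * ih
    · obtain ⟨t, rfl⟩ := ho
      have hev : evq q (2*t + 1 + 1) = evq q (2*t+1) * (1 - q^(2*(t+1))) := by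
        unfold evq
        have e1 : (2*t+1+1)/2 = t+1 := by omega
        have e2 : (2*t+1)/2 = t := by omega
        rw [e1, e2, ← Finset.prod_Icc_succ_top (by omega : 1 ≤ t + 1)]
      have e1 : (2*t+1+1+1)/2 = t+1 := by omega
      have e2 : (2*t+1+1)/2 = t+1 := by omega
      rw [e1, hev, pq_succ]
      rw [e2] at ih
      linear_combination (1 - q^(2*(t+1))) * ih

lemma tri (r : ℕ) : (r+1)*(r+2)/2 = r*(r+1)/2 + (r+1) := by
  have h2 : (r+1)*(r+2) = r*(r+1) + 2*(r+1) := by ring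
  obtain ⟨t, ht⟩ := Nat.even_mul_succ_self r
  rw [h2, ht]
  omega

lemma Tq_diag (hq0 : 0 ≤ q) (hq1 : q < 1) (n : ℕ) : Tq q n n = q^(n*(n+1)/2) := by
  have h := (pq_pos hq0 hq1 n).ne'
  unfold Tq
  rw [Nat.sub_self]
  norm_num [Oq_zero, pq_zero]
  rw [mul_comm, mul_div_assoc, div_self h, mul_one]

lemma Tq_top (hq0 : 0 ≤ q) (hq1 : q < 1) (n : ℕ) :
    Tq q (n+1) (n+1) = q^(n+1) * Tq q n n := by
  rw [Tq_diag hq0 hq1, Tq_diag hq0 hq1, ← pow_add]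
  congr 1
  have e : (n+1)*(n+1+1)/2 = n*(n+1)/2 + (n+1) := tri n
  omega

lemma Tq_step_odd (hq0 : 0 ≤ q) (hq1 : q < 1) {n r : ℕ} (hr : r ≤ n)
    (hodd : (n + 1 - r) % 2 = 1) :
    Tq q (n+1) r = (1 - q^(n+1)) * Tq q n r := by
  obtain ⟨m, hm⟩ : ∃ m, n - r = 2*m := ⟨(n-r)/2, by omega⟩
  have e1 : n + 1 - r = 2*m+1 := by omega
  have e2 : (n+1-r+1)/2 = m+1 := by omega
  have e3 : (n-r+1)/2 = m := by omega
  unfold Tq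
  rw [e1, hm]
  rw [show (2*m+1+1)/2 = m+1 from by omega, show (2*m+1)/2 = m from by omega,
    pq_succ n, pq_succ (2*m), Oq_succ]
  have e4 : (2*m)+1 = 2*m+1 := by omega
  rw [e4]
  have h1 := (pq_pos hq0 hq1 r).ne'
  have h2 := (pq_pos hq0 hq1 (2*m)).ne'
  have h3 := (one_sub_pow_pos hq0 hq1 (by omega : 1 ≤ 2*m+1)).ne'
  field_simp

lemma Tq_step_even (hq0 : 0 ≤ q) (hq1 : q < 1) {n s : ℕ} (hr : s + 1 ≤ n)
    (heven : (n + 1 - (s+1)) % 2 = 0) :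
    Tq q (n+1) (s+1) = Tq q n (s+1) + q^(n+1) * Tq q n s := by
  obtain ⟨m, hm⟩ : ∃ m, n - s = 2*m+2 := ⟨(n-s-2)/2, by omega⟩
  have e1 : n + 1 - (s+1) = 2*m+2 := by omega
  have e2 : n - (s+1) = 2*m+1 := by omega
  have e3 : (n+1-(s+1)+1)/2 = m+1 := by omega
  have e4 : (n-(s+1)+1)/2 = m+1 := by omega
  have e5 : (n-s+1)/2 = m+1 := by omega
  have e6 : (s+1)*(s+1+1)/2 = s*(s+1)/2 + (s+1) := tri s
  have e7 : n + 1 = (s+1) + (2*m+2) := by omega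
  unfold Tq
  rw [e1, e2, hm, e6, pow_add]
  rw [show (2*m+2+1)/2 = m+1 from by omega, show (2*m+1+1)/2 = m+1 from by omega,
    pq_succ n, pq_succ (2*m+1), pq_succ s, e7, pow_add]
  rw [show 2*m+1+1 = 2*m+2 from by omega]
  have h1 := (pq_pos hq0 hq1 s).ne'
  have h2 := (pq_pos hq0 hq1 (2*m+1)).ne'
  have h3 := (one_sub_pow_pos hq0 hq1 (by omega : 1 ≤ s+1)).ne'
  have h4 := (one_sub_pow_pos hq0 hq1 (by omega : 1 ≤ 2*m+1+1)).ne'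
  have h5 := (one_sub_pow_pos hq0 hq1 (by omega : 1 ≤ 2*m+2)).ne'
  field_simp
  ring

lemma Tq_zero_even (hq0 : 0 ≤ q) (hq1 : q < 1) {n : ℕ} (heven : (n + 1) % 2 = 0) :
    Tq q (n+1) 0 = Tq q n 0 := by
  have h1 := (pq_pos hq0 hq1 (n+1)).ne'
  have h2 := (pq_pos hq0 hq1 n).ne'
  unfold Tq
  rw [Nat.sub_zero, Nat.sub_zero, pq_zero]
  have e1 : (n+1+1)/2 = (n+1)/2 := by omega
  rw [e1]
  rw [pow_zero]
  field_simp

/-- the key finite `q`-identity. -/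
lemma sum_Tq (hq0 : 0 ≤ q) (hq1 : q < 1) (n : ℕ) :
    ∑ r ∈ Finset.range (n+1), Tq q n r = 1 := by
  induction n with
  | zero => simp [Tq, pq_zero, Oq]
  | succ n ih =>
    have key : ∑ r ∈ Finset.range (n+2), Tq q (n+1) r
        = ∑ r ∈ Finset.range (n+1), Tq q n r := by
      set G : ℕ → ℝ := fun r =>
        if r ≠ 0 ∧ (n + 2 - r) % 2 = 1 then -(q^(n+1) * Tq q n (r-1)) else 0 with hG
      have tele : ∀ r < n+2,
          Tq q (n+1) r = (if r ≤ n then Tq q n r else 0) + (G (r+1) - G r) := by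
        intro r hr
        rcases Nat.even_or_odd (n+1-r) with he | ho
        · -- n+1-r even
          have heven : (n+1-r) % 2 = 0 := Nat.even_iff.1 he
          have hg1 : G (r+1) = 0 := by
            rw [hG]; simp only
            rw [if_neg]; omega
          rcases Nat.eq_zero_or_pos r with rfl | hrpos
          · have hg0 : G 0 = 0 := by rw [hG]; simp
            rw [hg0, hg1, if_pos (by omega : (0:ℕ) ≤ n), Tq_zero_even hq0 hq1 (by omega)]
            ring
          · rcases Nat.lt_or_ge r (n+1) with hlt | hge
            · obtain ⟨s, rfl⟩ : ∃ s, r = s + 1 := ⟨r - 1, by omega⟩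
              have hg0 : G (s+1) = -(q^(n+1) * Tq q n s) := by
                rw [hG]; simp only
                rw [if_pos (by omega)]; norm_num
              rw [hg0, hg1, if_pos (by omega : s + 1 ≤ n),
                Tq_step_even hq0 hq1 (by omega) heven]
              ring
            · have hreq : r = n + 1 := by omega
              subst hreq
              have hg0 : G (n+1) = -(q^(n+1) * Tq q n n) := by
                rw [hG]; simp only
                rw [if_pos (by omega)]; norm_num
              rw [hg0, hg1, if_neg (by omega), Tq_top hq0 hq1]
              ring
        · have hodd : (n+1-r) % 2 = 1 := Nat.odd_iff.1 ho
          have hrn : r ≤ n := by omega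
          have hg1 : G (r+1) = -(q^(n+1) * Tq q n r) := by
            rw [hG]; simp only
            rw [if_pos (by omega)]; norm_num
          have hg0 : G r = 0 := by
            rw [hG]; simp only
            rw [if_neg]; omega
          rw [hg1, hg0, if_pos hrn, Tq_step_odd hq0 hq1 hrn hodd]
          ring
      calc ∑ r ∈ Finset.range (n+2), Tq q (n+1) r
          = ∑ r ∈ Finset.range (n+2),
              ((if r ≤ n then Tq q n r else 0) + (G (r+1) - G r)) := by
            refine Finset.sum_congr rfl fun r hr => ?_
            exact tele r (Finset.mem_range.1 hr)
        _ = (∑ r ∈ Finset.range (n+2), if r ≤ n then Tq q n r else 0)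
              + ∑ r ∈ Finset.range (n+2), (G (r+1) - G r) := by
            rw [Finset.sum_add_distrib]
        _ = ∑ r ∈ Finset.range (n+1), Tq q n r := by
            rw [Finset.sum_range_sub G (n+2)]
            have hGtop : G (n+2) = 0 := by rw [hG]; simp only; rw [if_neg]; omega
            have hG0 : G 0 = 0 := by rw [hG]; simp
            rw [hGtop, hG0, sub_zero, add_zero, Finset.sum_range_succ, if_neg (by omega),
              add_zero]
            refine Finset.sum_congr rfl fun r hr => ?_
            have hrn : r ≤ n := by have := Finset.mem_range.1 hr; omega
            rw [if_pos hrn]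
    rw [key, ih]

namespace Ptn

def pempty : Ptn := ⟨0, by simp⟩

lemma eq_pempty_of_numParts_eq_zero {l : Ptn} (h : l.numParts = 0) : l = pempty := by
  apply Subtype.ext
  exact Multiset.card_eq_zero.1 h

@[simp] lemma numParts_pempty : numParts pempty = 0 := rfl
@[simp] lemma size_pempty : size pempty = 0 := rfl
@[simp] lemma nStat_pempty : nStat pempty = 0 := by simp [nStat]

lemma part_le_size {l : Ptn} {x : ℕ} (hx : x ∈ l.1) : x ≤ l.size :=
  Multiset.single_le_sum (fun y _ => Nat.zero_le y) x hx

lemma mult_eq_zero_of_gt {l : Ptn} {i : ℕ} (hi : l.size < i) : l.mult i = 0 := by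
  rw [mult, Multiset.count_eq_zero]
  intro hmem
  exact absurd (part_le_size hmem) (by omega)

lemma col_eq_zero_of_gt {l : Ptn} {i : ℕ} (hi : l.size < i) : l.col i = 0 := by
  rw [col, Multiset.card_eq_zero, Multiset.filter_eq_nil]
  intro x hx hcontra
  exact absurd (part_le_size hx) (by omega)

lemma numParts_eq_sum_mult (l : Ptn) : ∑ i ∈ Finset.Icc 1 l.size, l.mult i = l.numParts := by
  rw [numParts, ← Multiset.toFinset_sum_count_eq]
  refine (Finset.sum_subset ?_ ?_).symm
  · intro a ha
    rw [Multiset.mem_toFinset] at ha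
    exact Finset.mem_Icc.2 ⟨l.2 a ha, part_le_size ha⟩
  · intro a _ ha
    rw [Multiset.mem_toFinset] at ha
    exact Multiset.count_eq_zero.2 ha

/-- add a first column of length `k` to `μ`. -/
def addCol (k : ℕ) (μ : Ptn) : Ptn :=
  ⟨μ.1.map (· + 1) + Multiset.replicate (k - μ.numParts) 1, by
    intro x hx
    rw [Multiset.mem_add] at hx
    rcases hx with hx | hx
    · obtain ⟨y, _, rfl⟩ := Multiset.mem_map.1 hx; omega
    · rw [Multiset.eq_of_mem_replicate hx]; norm_num⟩

variable {μ : Ptn} {k : ℕ}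

lemma count_one_map_add_one (s : Multiset ℕ) (hs : ∀ x ∈ s, 0 < x) :
    Multiset.count 1 (s.map (· + 1)) = 0 := by
  rw [Multiset.count_eq_zero]
  intro hmem
  obtain ⟨y, hy, hy1⟩ := Multiset.mem_map.1 hmem
  have h1 := hs y hy
  have h2 : y + 1 = 1 := hy1
  omega

lemma numParts_addCol (h : μ.numParts ≤ k) : (addCol k μ).numParts = k := by
  simp only [numParts, addCol, Multiset.card_add, Multiset.card_map,
    Multiset.card_replicate] at h ⊢
  omega

lemma size_addCol (h : μ.numParts ≤ k) : (addCol k μ).size = k + μ.size := by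
  simp only [size, numParts, addCol, Multiset.sum_add, Multiset.sum_replicate,
    smul_eq_mul, mul_one] at h ⊢
  have : (μ.1.map (· + 1)).sum = μ.1.sum + μ.1.card := by
    rw [show (fun x : ℕ => x + 1) = (fun x => id x + 1) from rfl, Multiset.sum_map_add]
    simp
  omega

lemma mult_addCol_one (h : μ.numParts ≤ k) : (addCol k μ).mult 1 = k - μ.numParts := by
  rw [mult, addCol]
  simp only [Multiset.count_add, Multiset.count_replicate]
  simp [count_one_map_add_one μ.1 μ.2]

lemma mult_addCol_succ (i : ℕ) : (addCol k μ).mult (i + 1 + 1) = μ.mult (i + 1) := by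
  rw [mult, mult, addCol]
  simp only [Multiset.count_add]
  have h1 : Multiset.count (i + 1 + 1) (Multiset.replicate (k - μ.numParts) 1) = 0 := by
    rw [Multiset.count_replicate, if_neg (by omega)]
  have h2 : Multiset.count (i + 1 + 1) (μ.1.map (· + 1)) = Multiset.count (i + 1) μ.1 := by
    have := Multiset.count_map_eq_count' (fun x : ℕ => x + 1) μ.1
      (fun a b hab => by simpa using hab) (i + 1)
    simpa using this
  omega

lemma col_addCol_one (h : μ.numParts ≤ k) : (addCol k μ).col 1 = k := by
  rw [col]
  have heq : Multiset.filter (fun x => 1 ≤ x) (addCol k μ).1 = (addCol k μ).1 :=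
    Multiset.filter_eq_self.2 fun x hx => (addCol k μ).2 x hx
  rw [heq]
  exact numParts_addCol h

lemma col_addCol_succ (i : ℕ) (hi : 1 ≤ i) : (addCol k μ).col (i + 1) = μ.col i := by
  rw [col, col, addCol]
  simp only [Multiset.filter_add]
  rw [Multiset.card_add]
  have h1 : Multiset.filter (fun x => i + 1 ≤ x) (Multiset.replicate (k - μ.numParts) 1)
      = 0 := by
    rw [Multiset.filter_eq_nil]
    intro x hx
    rw [Multiset.eq_of_mem_replicate hx]
    omega
  have h2 : (Multiset.filter (fun x => i + 1 ≤ x) (μ.1.map (· + 1))).card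
      = (Multiset.filter (fun x => i ≤ x) μ.1).card := by
    rw [Multiset.filter_map, Multiset.card_map]
    congr 1
    apply Multiset.filter_congr
    intro x _
    simp only [Function.comp_apply]
    omega
  rw [h1, h2, Multiset.card_zero, add_zero]

lemma nStat_ext {M : ℕ} (hM : μ.size ≤ M) :
    ∑ i ∈ Finset.Icc 1 M, (μ.col i).choose 2 = μ.nStat := by
  rw [nStat]
  refine (Finset.sum_subset (Finset.Icc_subset_Icc le_rfl hM) ?_).symm
  intro i hi hni
  rw [Finset.mem_Icc] at hi hni
  rw [col_eq_zero_of_gt (by omega)]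
  rfl

lemma nStat_addCol (h : μ.numParts ≤ k) (hk : 1 ≤ k) :
    (addCol k μ).nStat = k.choose 2 + μ.nStat := by
  rw [nStat, size_addCol h]
  obtain ⟨M, hM⟩ : ∃ M, k + μ.size = M + 1 := ⟨k + μ.size - 1, by omega⟩
  rw [hM, ← Finset.Ico_add_one_right_eq_Icc, Finset.sum_Ico_eq_sum_range]
  have e1 : M + 1 + 1 - 1 = M + 1 := by omega
  rw [e1, Finset.sum_range_succ']
  have e2 : ∀ i, (addCol k μ).col (1 + (i + 1)) = μ.col (i + 1) := by
    intro i
    rw [show 1 + (i + 1) = (i + 1) + 1 from by omega]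
    exact col_addCol_succ (i + 1) (by omega)
  have e3 : (addCol k μ).col (1 + 0) = k := col_addCol_one h
  rw [e3]
  have e4 : ∑ i ∈ Finset.range M, ((addCol k μ).col (1 + (i + 1))).choose 2
      = ∑ i ∈ Finset.range M, (μ.col (1 + i)).choose 2 := by
    refine Finset.sum_congr rfl fun i _ => ?_
    rw [e2 i, show 1 + i = i + 1 from by omega]
  have e5 : ∑ i ∈ Finset.range M, (μ.col (1 + i)).choose 2
      = ∑ i ∈ Finset.Icc 1 M, (μ.col i).choose 2 := by
    rw [← Finset.Ico_add_one_right_eq_Icc, Finset.sum_Ico_eq_sum_range]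
    norm_num
  rw [e4, e5, nStat_ext (by omega)]
  omega

/-- remove the first column. -/
def removeCol (l : Ptn) : Ptn :=
  ⟨(l.1.map (· - 1)).filter (fun x => x ≠ 0), by
    intro x hx
    have := Multiset.of_mem_filter hx
    omega⟩

lemma removeCol_spec (l : Ptn) :
    (removeCol l).1 = (l.1.filter (fun x => 2 ≤ x)).map (· - 1) := by
  rw [removeCol]
  simp only
  rw [Multiset.filter_map]
  congr 1
  apply Multiset.filter_congr
  intro x hx
  have := l.2 x hx
  simp only [Function.comp_apply]
  omega

lemma numParts_removeCol_le (l : Ptn) : (removeCol l).numParts ≤ l.numParts := by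
  rw [numParts, numParts, removeCol_spec, Multiset.card_map]
  exact Multiset.card_le_card (Multiset.filter_le _ _)

lemma addCol_removeCol (l : Ptn) : addCol l.numParts (removeCol l) = l := by
  apply Subtype.ext
  rw [addCol]
  simp only
  have hA : (removeCol l).1.map (· + 1) = l.1.filter (fun x => 2 ≤ x) := by
    rw [removeCol_spec, Multiset.map_map]
    rw [show ((· + 1) ∘ (· - 1) : ℕ → ℕ) = fun x => x - 1 + 1 from rfl]
    calc Multiset.map (fun x => x - 1 + 1) (l.1.filter (fun x => 2 ≤ x))
        = Multiset.map id (l.1.filter (fun x => 2 ≤ x)) := by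
          apply Multiset.map_congr rfl
          intro x hx
          have := Multiset.of_mem_filter hx
          simp only [id_eq]
          omega
      _ = _ := by rw [Multiset.map_id]
  have hB : l.1.filter (fun x => ¬ 2 ≤ x) =
      Multiset.replicate (l.1.filter (fun x => ¬ 2 ≤ x)).card 1 := by
    rw [Multiset.eq_replicate]
    refine ⟨rfl, ?_⟩
    intro b hb
    have h1 := Multiset.of_mem_filter hb
    have h2 := l.2 b (Multiset.mem_of_mem_filter hb)
    omega
  have hcard : l.numParts - (removeCol l).numParts
      = (l.1.filter (fun x => ¬ 2 ≤ x)).card := by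
    have := Multiset.filter_add_not (fun x => 2 ≤ x) l.1
    have hc : l.numParts = (l.1.filter (fun x => 2 ≤ x)).card
        + (l.1.filter (fun x => ¬ 2 ≤ x)).card := by
      rw [numParts, ← Multiset.card_add, this]
    have hr : (removeCol l).numParts = (l.1.filter (fun x => 2 ≤ x)).card := by
      rw [numParts, removeCol_spec, Multiset.card_map]
    omega
  rw [hA, hcard, ← hB]
  exact Multiset.filter_add_not _ _

lemma addCol_injective {k₁ k₂ : ℕ} {μ₁ μ₂ : Ptn} (h₁ : μ₁.numParts ≤ k₁)
    (h₂ : μ₂.numParts ≤ k₂) (heq : addCol k₁ μ₁ = addCol k₂ μ₂) :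
    k₁ = k₂ ∧ μ₁ = μ₂ := by
  have hk : k₁ = k₂ := by
    rw [← numParts_addCol h₁, ← numParts_addCol h₂, heq]
  subst hk
  refine ⟨rfl, ?_⟩
  have hval : μ₁.1.map (· + 1) + Multiset.replicate (k₁ - μ₁.numParts) 1
      = μ₂.1.map (· + 1) + Multiset.replicate (k₁ - μ₂.numParts) 1 := by
    have := congrArg Subtype.val heq
    rwa [addCol, addCol] at this
  have hcnt := congrArg (Multiset.count 1) hval
  rw [Multiset.count_add, Multiset.count_add, count_one_map_add_one μ₁.1 μ₁.2,
    count_one_map_add_one μ₂.1 μ₂.2, Multiset.count_replicate, Multiset.count_replicate,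
    if_pos rfl, if_pos rfl] at hcnt
  have hrep : k₁ - μ₁.numParts = k₁ - μ₂.numParts := by omega
  rw [hrep] at hval
  have hmap := add_right_cancel hval
  have := Multiset.map_injective (f := (· + 1 : ℕ → ℕ)) (fun a b hab => by simpa using hab) hmap
  exact Subtype.ext this

end Ptn

open Ptn

section Bridge

variable {p q : ℝ} {n k : ℕ} {μ l : Ptn}

/-- the prefactor `A(n,r)`. -/
def Anq (q : ℝ) (n r : ℕ) : ℝ :=
  (∏ j ∈ Finset.Icc (n - r + 1) n, (1 - q^j)) * Oq q ((n - r + 1)/2)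

/-- the `n`-independent weight. -/
def wq (q : ℝ) (l : Ptn) : ℝ :=
  q^(l.nStat + l.size) / ∏ i ∈ Finset.Icc 1 l.size, evq q (l.mult i)

lemma pq_split (h : k ≤ n) :
    pq q (n - k) * (∏ j ∈ Finset.Icc (n - k + 1) n, (1 - q^j)) = pq q n := by
  rw [pq, pq]
  rw [show Finset.Icc 1 (n - k) = Finset.Ioc 0 (n - k) from Finset.Icc_add_one_left_eq_Ioc 0 (n-k),
    show Finset.Icc (n - k + 1) n = Finset.Ioc (n - k) n from Finset.Icc_add_one_left_eq_Ioc (n-k) n,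
    show Finset.Icc 1 n = Finset.Ioc 0 n from Finset.Icc_add_one_left_eq_Ioc 0 n]
  exact Finset.prod_Ioc_consecutive _ (by omega : 0 ≤ n - k) (by omega : n - k ≤ n)

lemma Anq_mul_pq (h : k ≤ n) :
    Anq q n k * pq q (n - k) = pq q n * Oq q ((n - k + 1)/2) := by
  rw [Anq, mul_right_comm, mul_comm (∏ j ∈ Finset.Icc (n-k+1) n, (1 - q^j)), pq_split h]

lemma Anq_mul_evq (h : k ≤ n) :
    Anq q n k * evq q (n - k) = pq q n := by
  rw [Anq, mul_assoc, Oq_mul_evq, mul_comm, pq_split h]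

lemma PSym_eq_of_le (h : l.numParts ≤ n) :
    PSym p n l = Anq (1/p) n l.numParts * wq (1/p) l := by
  rw [PSym, if_pos h]
  simp only [Anq, wq, evq, Oq, one_div, inv_pow]
  rw [div_eq_mul_inv, div_eq_mul_inv, mul_inv]
  try ring

lemma PSym_pempty : PSym p n pempty = (∏ i ∈ Finset.Icc 1 ((n+1)/2), (1 - (1/p)^(2*i-1))) := by
  rw [PSym, if_pos (by simp : numParts pempty ≤ n)]
  simp only [numParts_pempty, size_pempty, nStat_pempty, Nat.sub_zero]
  rw [Finset.Icc_eq_empty (by omega : ¬ n + 1 ≤ n)]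
  simp [one_div, inv_pow]

lemma PSym_pempty_eq_Tq (hp : 1 < p) : PSym p n pempty = Tq (1/p) n 0 := by
  have hq0 : (0:ℝ) < 1/p := by positivity
  have hq1 : (1:ℝ)/p < 1 := by rw [div_lt_one (by linarith)]; linarith
  have hpq := (pq_pos hq0.le hq1 n).ne'
  rw [PSym_pempty, Tq, Nat.sub_zero, pq_zero, pow_zero, one_mul, mul_one, Oq]
  field_simp

lemma PSym_eq_zero_of_gt (h : n < l.numParts) : PSym p n l = 0 := by
  rw [PSym, if_neg (by omega)]

/-- the product of the `evq` terms transforms well under `addCol`. -/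
lemma prod_evq_ext {M : ℕ} (hM : μ.size ≤ M) :
    ∏ i ∈ Finset.Icc 1 M, evq q (μ.mult i) = ∏ i ∈ Finset.Icc 1 μ.size, evq q (μ.mult i) := by
  refine (Finset.prod_subset (Finset.Icc_subset_Icc le_rfl hM) ?_).symm
  intro i hi hni
  rw [Finset.mem_Icc] at hi hni
  rw [mult_eq_zero_of_gt (by omega)]
  unfold evq
  norm_num

lemma prod_evq_addCol (h : μ.numParts ≤ k) (hk : 1 ≤ k) :
    ∏ i ∈ Finset.Icc 1 (addCol k μ).size, evq q ((addCol k μ).mult i)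
      = evq q (k - μ.numParts) * ∏ i ∈ Finset.Icc 1 μ.size, evq q (μ.mult i) := by
  rw [size_addCol h]
  obtain ⟨M, hM⟩ : ∃ M, k + μ.size = M + 1 := ⟨k + μ.size - 1, by omega⟩
  rw [hM, ← Finset.Ico_add_one_right_eq_Icc, Finset.prod_Ico_eq_prod_range]
  have e1 : M + 1 + 1 - 1 = M + 1 := by omega
  rw [e1, Finset.prod_range_succ']
  have e3 : (addCol k μ).mult (1 + 0) = k - μ.numParts := mult_addCol_one h
  rw [e3, mul_comm]
  congr 1
  have e4 : ∀ i, (addCol k μ).mult (1 + (i + 1)) = μ.mult (i + 1) := by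
    intro i
    rw [show 1 + (i + 1) = i + 1 + 1 from by omega]
    exact mult_addCol_succ i
  calc ∏ i ∈ Finset.range M, evq q ((addCol k μ).mult (1 + (i + 1)))
      = ∏ i ∈ Finset.range M, evq q (μ.mult (1 + i)) := by
        refine Finset.prod_congr rfl fun i _ => ?_
        rw [e4 i, show 1 + i = i + 1 from by omega]
    _ = ∏ i ∈ Finset.Icc 1 M, evq q (μ.mult i) := by
        rw [← Finset.Ico_add_one_right_eq_Icc, Finset.prod_Ico_eq_prod_range]
        norm_num
    _ = _ := prod_evq_ext (by omega)

lemma choose_two_add_self (hk : 1 ≤ k) : k.choose 2 + k = k*(k+1)/2 := by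
  obtain ⟨m, rfl⟩ : ∃ m, k = m + 1 := ⟨k - 1, by omega⟩
  rw [Nat.choose_two_right, show m + 1 - 1 = m from rfl]
  have h1 : (m+1)*(m+2)/2 = m*(m+1)/2 + (m+1) := tri m
  have h2 : (m+1)*m = m*(m+1) := Nat.mul_comm _ _
  have h3 : (m+1)*(m+1+1) = (m+1)*(m+2) := rfl
  omega

lemma wq_addCol (h : μ.numParts ≤ k) (hk : 1 ≤ k) :
    wq q (addCol k μ) = q^(k*(k+1)/2) * wq q μ / evq q (k - μ.numParts) := by
  rw [wq, wq, prod_evq_addCol h hk, nStat_addCol h hk, size_addCol h,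
    ← choose_two_add_self hk]
  rw [show k.choose 2 + μ.nStat + (k + μ.size) = (k.choose 2 + k) + (μ.nStat + μ.size) from by
    omega]
  rw [pow_add]
  ring

/-- THE fiber identity. -/
lemma PSym_addCol (hp : 1 < p) (h : μ.numParts ≤ k) (hk : 1 ≤ k) (hkn : k ≤ n) :
    PSym p n (addCol k μ) = Tq (1/p) n k * PSym p k μ := by
  set q : ℝ := 1/p with hq
  have hq0 : (0:ℝ) < q := by rw [hq]; positivity
  have hq1 : q < 1 := by rw [hq, div_lt_one (by linarith)]; linarith
  have hnp : (addCol k μ).numParts = k := numParts_addCol h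
  rw [PSym_eq_of_le (by omega : (addCol k μ).numParts ≤ n), hnp,
    PSym_eq_of_le h, ← hq, wq_addCol h hk]
  have hne1 : pq q (n - k) ≠ 0 := (pq_pos hq0.le hq1 _).ne'
  have hne2 : evq q (k - μ.numParts) ≠ 0 := (evq_pos hq0.le hq1 _).ne'
  have hne3 : pq q k ≠ 0 := (pq_pos hq0.le hq1 _).ne'
  have e1 : Anq q n k = pq q n * Oq q ((n - k + 1)/2) / pq q (n - k) := by
    rw [eq_div_iff hne1]; exact Anq_mul_pq hkn
  have e2 : Anq q k μ.numParts = pq q k / evq q (k - μ.numParts) := by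
    rw [eq_div_iff hne2]; exact Anq_mul_evq h
  rw [e1, e2, Tq]
  field_simp

end Bridge

section Summability

variable {p q : ℝ} {n : ℕ} {l : Ptn}

lemma sub_one_div_pow_nonneg (hp : 1 < p) (j : ℕ) : 0 ≤ 1 - 1/p^j := by
  have h1 : (1:ℝ) ≤ p^j := one_le_pow₀ (by linarith)
  have h2 : (1:ℝ)/p^j ≤ 1 := by
    rw [div_le_one (by linarith)]; exact h1
  linarith

lemma sub_one_div_pow_pos (hp : 1 < p) {j : ℕ} (hj : 1 ≤ j) : 0 < 1 - 1/p^j := by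
  have h1 : (1:ℝ) < p^j := one_lt_pow₀ hp (by omega)
  have h2 : (1:ℝ)/p^j < 1 := by
    rw [div_lt_one (by linarith)]; exact h1
  linarith

lemma PSym_den_pos (hp : 1 < p) :
    0 < p ^ (l.nStat + l.size) *
      ∏ i ∈ Finset.Icc 1 l.size, ∏ j ∈ Finset.Icc 1 (l.mult i / 2), (1 - 1 / p ^ (2*j)) := by
  apply mul_pos (by positivity)
  refine Finset.prod_pos fun i _ => Finset.prod_pos fun j hj => ?_
  exact sub_one_div_pow_pos hp (by have := (Finset.mem_Icc.1 hj).1; omega)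

lemma PSym_num_nonneg (hp : 1 < p) {r : ℕ} :
    0 ≤ (∏ j ∈ Finset.Icc (n - r + 1) n, (1 - 1 / p ^ j)) *
      ∏ i ∈ Finset.Icc 1 ((n - r + 1) / 2), (1 - 1 / p ^ (2 * i - 1)) := by
  apply mul_nonneg <;>
    exact Finset.prod_nonneg fun j _ => sub_one_div_pow_nonneg hp _

lemma PSym_num_le_one (hp : 1 < p) {r : ℕ} :
    (∏ j ∈ Finset.Icc (n - r + 1) n, (1 - 1 / p ^ j)) *
      ∏ i ∈ Finset.Icc 1 ((n - r + 1) / 2), (1 - 1 / p ^ (2 * i - 1)) ≤ 1 := by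
  apply mul_le_one₀
  · exact Finset.prod_le_one (fun j _ => sub_one_div_pow_nonneg hp _)
      (fun j _ => by have := sub_one_div_pow_nonneg hp j; have : 0 ≤ 1/p^j := by positivity
                     linarith)
  · exact Finset.prod_nonneg fun j _ => sub_one_div_pow_nonneg hp _
  · exact Finset.prod_le_one (fun j _ => sub_one_div_pow_nonneg hp _)
      (fun j _ => by have : 0 ≤ 1/p^(2*j-1) := by positivity
                     linarith)

lemma PSym_nonneg (hp : 1 < p) (n : ℕ) (l : Ptn) : 0 ≤ PSym p n l := by
  rw [PSym]
  split
  · exact div_nonneg (PSym_num_nonneg hp) (PSym_den_pos hp).le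
  · exact le_refl 0

lemma PSym_le_bound (hp : 1 < p) (h : l.numParts ≤ n) :
    PSym p n l ≤ ((1 - (1/p)^2)^n)⁻¹ * (1/p)^l.size := by
  have hq2 : 0 < 1 - (1/p)^2 := by
    rw [one_div_pow]; exact sub_one_div_pow_pos hp (by omega)
  have hq2' : 1 - (1/p)^2 ≤ 1 := by
    have : (0:ℝ) ≤ (1/p)^2 := by positivity
    linarith
  have hDge : p ^ l.size * (1 - (1/p)^2)^n ≤ p ^ (l.nStat + l.size) *
      ∏ i ∈ Finset.Icc 1 l.size, ∏ j ∈ Finset.Icc 1 (l.mult i / 2), (1 - 1 / p ^ (2*j)) := by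
    apply mul_le_mul
    · exact pow_le_pow_right₀ (by linarith) (by omega)
    · -- (1-(1/p)^2)^n ≤ ∏ inner
      calc (1 - (1/p)^2)^n ≤ (1 - (1/p)^2)^l.numParts :=
            pow_le_pow_of_le_one hq2.le hq2' h
        _ = ∏ i ∈ Finset.Icc 1 l.size, (1 - (1/p)^2)^(l.mult i) := by
            rw [Finset.prod_pow_eq_pow_sum, Ptn.numParts_eq_sum_mult]
        _ ≤ ∏ i ∈ Finset.Icc 1 l.size, ∏ j ∈ Finset.Icc 1 (l.mult i / 2), (1 - 1/p^(2*j)) := by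
            refine Finset.prod_le_prod (fun i _ => by positivity) (fun i _ => ?_)
            calc (1 - (1/p)^2)^(l.mult i) ≤ (1 - (1/p)^2)^(l.mult i / 2) :=
                  pow_le_pow_of_le_one hq2.le hq2' (by omega)
              _ = ∏ j ∈ Finset.Icc 1 (l.mult i / 2), (1 - (1/p)^2) := by
                  rw [Finset.prod_const, Nat.card_Icc]
                  norm_num
              _ ≤ ∏ j ∈ Finset.Icc 1 (l.mult i / 2), (1 - 1/p^(2*j)) := by
                  refine Finset.prod_le_prod (fun j _ => hq2.le) (fun j hj => ?_)
                  have hj1 := (Finset.mem_Icc.1 hj).1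
                  have hple : p^2 ≤ p^(2*j) := pow_le_pow_right₀ (by linarith) (by omega)
                  have : 1/p^(2*j) ≤ 1/p^2 :=
                    one_div_le_one_div_of_le (by positivity) hple
                  rw [one_div_pow]
                  linarith
    · positivity
    · positivity
  have hApos : (0:ℝ) < p ^ l.size * (1 - (1/p)^2)^n := by positivity
  calc PSym p n l
      ≤ 1 / (p ^ l.size * (1 - (1/p)^2)^n) := by
        rw [PSym, if_pos h]
        exact div_le_div₀ (by norm_num) (PSym_num_le_one hp) hApos hDge
    _ = ((1 - (1/p)^2)^n)⁻¹ * (1/p)^l.size := by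
        have hne : (1 - (1/p)^2) ≠ 0 := hq2.ne'
        have hp0 : p ≠ 0 := by linarith
        simp only [one_div, mul_inv, inv_pow]
        ring

/-- the padded sorted list of parts. -/
def theList (nn : ℕ) (l : Ptn) : List ℕ :=
  (Multiset.sort l.1 (·≤·)) ++ List.replicate (nn - l.numParts) 0

lemma length_theList (h : l.numParts ≤ n) : (theList n l).length = n := by
  rw [theList, List.length_append, Multiset.length_sort, List.length_replicate]
  rw [Ptn.numParts] at h ⊢
  omega

lemma sum_theList : (theList n l).sum = l.size := by
  rw [theList, List.sum_append, List.sum_replicate, smul_zero, add_zero]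
  have h1 : ((Multiset.sort l.1 (·≤·) : List ℕ) : Multiset ℕ).sum = l.1.sum := by
    rw [Multiset.sort_eq]
  rw [Multiset.sum_coe] at h1
  exact h1

lemma recover_theList : Multiset.filter (fun x => x ≠ 0) (↑(theList n l) : Multiset ℕ) = l.1 := by
  rw [theList, ← Multiset.coe_add, Multiset.sort_eq, Multiset.coe_replicate,
    Multiset.filter_add]
  have h1 : Multiset.filter (fun x => x ≠ 0) l.1 = l.1 :=
    Multiset.filter_eq_self.2 fun x hx => by have := l.2 x hx; omega
  have h2 : Multiset.filter (fun x => x ≠ 0) (Multiset.replicate (n - l.numParts) 0) = 0 :=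
    Multiset.filter_eq_nil.2 fun a ha => by
      rw [Multiset.eq_of_mem_replicate ha]; simp
  rw [h1, h2, add_zero]

def iota (nn : ℕ) : {l : Ptn // l.numParts ≤ nn} → (Fin nn → ℕ) :=
  fun l i => (theList nn l.1).getD i 0

lemma iota_injective : Function.Injective (iota n) := by
  intro a b hab
  have hlen1 : (theList n a.1).length = n := length_theList a.2
  have hlen2 : (theList n b.1).length = n := length_theList b.2
  have hl : theList n a.1 = theList n b.1 := by
    refine List.ext_getElem (by rw [hlen1, hlen2]) fun i h1 h2 => ?_
    have hin : i < n := by omega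
    have := congrFun hab ⟨i, hin⟩
    rw [iota, iota] at this
    simp only at this
    rwa [List.getD_eq_getElem _ _ h1, List.getD_eq_getElem _ _ h2] at this
  apply Subtype.ext
  apply Subtype.ext
  rw [← recover_theList (n := n) (l := a.1), ← recover_theList (n := n) (l := b.1), hl]

lemma sum_getD_range (L : List ℕ) : ∑ i ∈ Finset.range L.length, L.getD i 0 = L.sum := by
  induction L with
  | nil => simp
  | cons a t ih =>
    rw [List.length_cons, Finset.sum_range_succ']
    simp only [List.getD_cons_succ, List.getD_cons_zero, List.sum_cons]
    rw [ih]
    omega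

lemma sum_getD_range' (L : List ℕ) (M : ℕ) (h : L.length = M) :
    ∑ i ∈ Finset.range M, L.getD i 0 = L.sum := by
  subst h; exact sum_getD_range L

lemma sum_iota (a : {l : Ptn // l.numParts ≤ n}) : ∑ i, iota n a i = a.1.size := by
  rw [show ∑ i, iota n a i = ∑ i : Fin n, (theList n a.1).getD i 0 from rfl,
    Fin.sum_univ_eq_sum_range (fun i => (theList n a.1).getD i 0) n,
    sum_getD_range' _ n (length_theList a.2), sum_theList]

set_option maxHeartbeats 1000000 in
lemma summable_geom_pi (hq0 : 0 ≤ q) (hq1 : q < 1) (nn : ℕ) :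
    Summable (fun v : Fin nn → ℕ => ∏ i, q^(v i)) := by
  induction nn with
  | zero => exact .of_finite
  | succ m ih =>
    have hG : Summable (fun x : ℕ × (Fin m → ℕ) => q^(x.1) * ∏ i, q^(x.2 i)) :=
      Summable.mul_of_nonneg (f := fun k : ℕ => q^k) (g := fun y : Fin m → ℕ => ∏ i, q^(y i))
        (summable_geometric_of_lt_one hq0 hq1) ih
        (fun x => by positivity) (fun x => Finset.prod_nonneg fun i _ => by positivity)
    have he : Function.Injective (fun v : Fin (m+1) → ℕ => (v 0, fun i : Fin m => v i.succ)) := by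
      intro v w hvw
      have h1 := congrArg Prod.fst hvw
      have h2 := congrArg Prod.snd hvw
      simp only at h1 h2
      funext i
      refine Fin.cases ?_ ?_ i
      · exact h1
      · intro j; exact congrFun h2 j
    have hcomp := hG.comp_injective he
    refine hcomp.congr fun v => ?_
    simp only [Function.comp_apply]
    rw [Fin.prod_univ_succ]

lemma summable_PSym (hp : 1 < p) (n : ℕ) : Summable (PSym p n) := by
  have hq0 : (0:ℝ) ≤ 1/p := by positivity
  have hq1 : (1:ℝ)/p < 1 := by rw [div_lt_one (by linarith)]; linarith
  set c : ℝ := ((1 - (1/p)^2)^n)⁻¹ with hc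
  have hsub : Summable ((fun l : Ptn => c * (1/p)^l.size) ∘ (Subtype.val : {l : Ptn // l.numParts ≤ n} → Ptn)) := by
    have hcomp : ((fun l : Ptn => c * (1/p)^l.size) ∘ (Subtype.val : {l : Ptn // l.numParts ≤ n} → Ptn))
        = fun a => c * ((fun v : Fin n → ℕ => ∏ i, (1/p)^(v i)) ∘ iota n) a := by
      funext a
      simp only [Function.comp_apply]
      rw [Finset.prod_pow_eq_pow_sum, sum_iota]
    rw [hcomp]
    exact ((summable_geom_pi hq0 hq1 n).comp_injective iota_injective).mul_left c
  have hind : Summable (Set.indicator {l : Ptn | l.numParts ≤ n} (fun l => c * (1/p)^l.size)) :=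
    summable_subtype_iff_indicator.1 hsub
  refine Summable.of_nonneg_of_le (PSym_nonneg hp n) (fun l => ?_) hind
  by_cases h : l.numParts ≤ n
  · rw [Set.indicator_of_mem (by exact h)]
    exact PSym_le_bound hp h
  · rw [Set.indicator_of_notMem (by exact h), PSym_eq_zero_of_gt (by omega)]

end Summability

open Ptn

/-- `P^{Sym}_n` is a probability distribution on partitions:
the sum over all partitions (it vanishes on partitions with more than `n` parts)
equals `1`. -/
theorem PSym_is_probability (p : ℝ) (hp : 1 < p) (n : ℕ) (hn : 0 < n) :
    ∑' l : Ptn, PSym p n l = 1 := by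
  classical
  revert hn
  induction n using Nat.strong_induction_on with
  | _ n IH =>
  intro hn
  obtain ⟨m, rfl⟩ : ∃ m, n = m + 1 := ⟨n - 1, by omega⟩
  have hq0 : (0:ℝ) ≤ 1/p := by positivity
  have hq1 : (1:ℝ)/p < 1 := by rw [div_lt_one (by linarith)]; linarith
  have hsum := summable_PSym hp (m+1)
  -- step 1 : peel off the empty partition
  have h1 := Summable.tsum_eq_add_tsum_ite hsum pempty
  -- the modified function
  set f' : Ptn → ℝ := fun l => if l = pempty then 0 else PSym p (m+1) l with hf'def
  have hf'nonneg : ∀ l, 0 ≤ f' l := by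
    intro l; rw [hf'def]; dsimp only
    split
    · exact le_refl 0
    · exact PSym_nonneg hp _ l
  have hf'le : ∀ l, f' l ≤ PSym p (m+1) l := by
    intro l; rw [hf'def]; dsimp only
    split
    · exact PSym_nonneg hp _ l
    · exact le_refl _
  have hf' : Summable f' := Summable.of_nonneg_of_le hf'nonneg hf'le hsum
  -- step 2 : reindex the nonempty partitions by (k, μ) with μ.numParts ≤ k+1
  set e : ((k : ℕ) × {μ : Ptn // μ.numParts ≤ k + 1}) → Ptn :=
    fun x => addCol (x.1 + 1) x.2.1 with hedef
  have he : Function.Injective e := by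
    rintro ⟨k1, μ1, h1'⟩ ⟨k2, μ2, h2'⟩ h
    obtain ⟨hk, hμ⟩ := addCol_injective h1' h2' h
    have hk' : k1 = k2 := by omega
    subst hk'
    subst hμ
    rfl
  have hesupp : Function.support f' ⊆ Set.range e := by
    intro l hl
    rw [Function.mem_support] at hl
    have hlne : l ≠ pempty := by
      intro h; rw [hf'def] at hl; simp [h] at hl
    have hnp : l.numParts ≠ 0 := fun h => hlne (eq_pempty_of_numParts_eq_zero h)
    refine ⟨⟨l.numParts - 1, removeCol l, ?_⟩, ?_⟩
    · have := numParts_removeCol_le l; omega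
    · show addCol (l.numParts - 1 + 1) (removeCol l) = l
      rw [show l.numParts - 1 + 1 = l.numParts from by omega]
      exact addCol_removeCol l
  have h2 : ∑' x, f' (e x) = ∑' l, f' l := he.tsum_eq hesupp
  have h3 : ∀ x : ((k : ℕ) × {μ : Ptn // μ.numParts ≤ k + 1}),
      f' (e x) = PSym p (m+1) (addCol (x.1 + 1) x.2.1) := by
    rintro ⟨k, μ, hμ⟩
    rw [hf'def, hedef]
    dsimp only
    rw [if_neg]
    intro hcon
    have := numParts_addCol hμ
    rw [hcon] at this
    simp at this
  have h4 : Summable (f' ∘ e) := hf'.comp_injective he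
  have h5 := Summable.tsum_sigma h4
  -- step 3 : compute each fiber
  set g : ℕ → ℝ := fun k =>
    if k + 1 ≤ m + 1 then Tq (1/p) (m+1) (k+1) * ∑' l : Ptn, PSym p (k+1) l else 0 with hgdef
  have h6 : ∀ k : ℕ, (∑' μ : {μ : Ptn // μ.numParts ≤ k + 1},
      PSym p (m+1) (addCol (k+1) μ.1)) = g k := by
    intro k
    by_cases hk : k + 1 ≤ m + 1
    · rw [hgdef]; dsimp only; rw [if_pos hk]
      have hrw : ∀ μ : {μ : Ptn // μ.numParts ≤ k + 1},
          PSym p (m+1) (addCol (k+1) μ.1) = Tq (1/p) (m+1) (k+1) * PSym p (k+1) μ.1 :=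
        fun μ => PSym_addCol hp μ.2 (by omega) hk
      rw [tsum_congr hrw, tsum_mul_left]
      congr 1
      have hss : Function.support (PSym p (k+1)) ⊆ {μ : Ptn | μ.numParts ≤ k + 1} := by
        intro l hl
        rw [Function.mem_support] at hl
        by_contra hcon
        exact hl (PSym_eq_zero_of_gt (by simpa using hcon))
      exact tsum_subtype_eq_of_support_subset hss
    · rw [hgdef]; dsimp only; rw [if_neg hk]
      have hz : ∀ μ : {μ : Ptn // μ.numParts ≤ k + 1},
          PSym p (m+1) (addCol (k+1) μ.1) = 0 := fun μ =>
        PSym_eq_zero_of_gt (by rw [numParts_addCol μ.2]; omega)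
      rw [tsum_congr hz]
      exact tsum_zero
  have h7 : ∑' k : ℕ, g k = ∑ k ∈ Finset.range (m+1), g k := by
    refine tsum_eq_sum fun k hk => ?_
    rw [Finset.mem_range] at hk
    rw [hgdef]; dsimp only; rw [if_neg (by omega)]
  -- assemble the recursion
  have hrec : ∑' l, PSym p (m+1) l
      = PSym p (m+1) pempty + ∑ k ∈ Finset.range (m+1), g k := by
    rw [h1, ← h2]
    congr 1
    rw [← h7]
    calc ∑' x, f' (e x)
        = ∑' (k : ℕ) (μ : {μ : Ptn // μ.numParts ≤ k + 1}), (f' ∘ e) ⟨k, μ⟩ := h5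
      _ = ∑' k, g k := by
          refine tsum_congr fun k => ?_
          rw [← h6 k]
          exact tsum_congr fun μ => h3 ⟨k, μ⟩
  -- use the induction hypothesis on the lower fibers
  have hIH : ∀ k ∈ Finset.range m, g k = Tq (1/p) (m+1) (k+1) := by
    intro k hk
    rw [Finset.mem_range] at hk
    rw [hgdef]; dsimp only
    have hIH1 : ∑' l : Ptn, PSym p (k+1) l = 1 := IH (k+1) (by omega) (by omega)
    rw [if_pos (by omega), hIH1, mul_one]
  have hgm : g m = Tq (1/p) (m+1) (m+1) * ∑' l : Ptn, PSym p (m+1) l := by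
    rw [hgdef]; dsimp only; rw [if_pos (by omega)]
  rw [Finset.sum_range_succ, Finset.sum_congr rfl hIH, hgm] at hrec
  -- the q-identity
  have hid := sum_Tq hq0 hq1 (m+1)
  rw [Finset.sum_range_succ', Finset.sum_range_succ] at hid
  rw [← PSym_pempty_eq_Tq hp] at hid
  -- solve for the tsum
  set c : ℝ := Tq (1/p) (m+1) (m+1) with hcdef
  have hclt : c < 1 := by
    rw [hcdef, Tq_diag hq0 hq1]
    refine pow_lt_one₀ hq0 hq1 ?_
    have h22 : 2 ≤ (m+1)*(m+1+1) := by
      have := Nat.mul_le_mul (show 1 ≤ m+1 by omega) (show 2 ≤ m+1+1 by omega)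
      simpa using this
    omega
  set S : ℝ := ∑' l : Ptn, PSym p (m+1) l
  have heq : (1 - c) * S = (1 - c) * 1 := by
    rw [mul_one]
    linarith [hrec, hid]
  exact mul_left_cancel₀ (by linarith : (1:ℝ) - c ≠ 0) heq
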